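/- Let a > 0 be real. For every complex number x, the monic Charlier polynomials Ĉ_n(x;a) = (−a)^n C_n(x;a) satisfy lim_{n→∞} (−1)^n · Ĉ_n(x;a)/Γ(n−x) = e^a/Γ(−x), where 1/Γ(−x) is interpreted as 0 when −x is a nonpositive integer. -/

import Mathlib

open Filter Topology Finset

/-- The Pochhammer symbol (rising factorial) `(u)_k = u (u+1) ⋯ (u+k-1)`, with `(u)_0 = 1`. -/
noncomputable def poch (u : ℂ) (k : ℕ) : ℂ := ∏ i ∈ range k, (u + i)

/-- The Charlier polynomial `C_n(x; a) = ∑_{j=0}^n (−n)_j (−x)_j / j! · (−1/a)^j`. -/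
noncomputable def charlier (a : ℝ) (n : ℕ) (x : ℂ) : ℂ :=
  ∑ j ∈ range (n + 1),
    poch (-(n : ℂ)) j * poch (-x) j / (j.factorial : ℂ) * (-(1 / (a : ℂ))) ^ j

/-- The monic Charlier polynomial `Ĉ_n(x;a) = (−a)ⁿ C_n(x;a)`. -/
noncomputable def monicCharlier (a : ℝ) (n : ℕ) (x : ℂ) : ℂ :=
  (-(a : ℂ)) ^ n * charlier a n x

lemma poch_succ (u : ℂ) (k : ℕ) : poch u (k+1) = poch u k * (u + k) := Finset.prod_range_succ _ _

lemma poch_add (u : ℂ) (m k : ℕ) : poch u (m + k) = poch u m * poch (u + m) k := by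
  unfold poch
  rw [Finset.prod_range_add]
  exact congrArg _ (Finset.prod_congr rfl fun i _ => by push_cast; ring)

lemma poch_one_eq_factorial (n : ℕ) : poch 1 n = (n.factorial : ℂ) := by
  induction n with
  | zero => simp [poch]
  | succ k ih => rw [poch_succ, ih, Nat.factorial_succ]; push_cast; ring

lemma poch_neg_nat (n j : ℕ) :
    poch (-(n : ℂ)) j = (-1) ^ j * poch ((n : ℂ) - j + 1) j := by
  unfold poch
  have h1 : ∀ i ∈ range j, (-(n:ℂ) + i) = (-1) * ((n : ℂ) - i) := by
    intro i _; ring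
  rw [Finset.prod_congr rfl h1, Finset.prod_mul_distrib, Finset.prod_const, Finset.card_range]
  congr 1
  rw [← Finset.prod_range_reflect (fun i => (n : ℂ) - j + 1 + i) j]
  refine Finset.prod_congr rfl fun i hi => ?_
  rw [Finset.mem_range] at hi
  have : ((j - 1 - i : ℕ) : ℂ) = (j : ℂ) - 1 - i := by
    have := Nat.cast_sub (by omega : i ≤ j - 1) (R := ℂ)
    rw [this, Nat.cast_sub (by omega : 1 ≤ j)]; push_cast; ring
  rw [this]; ring

lemma Gamma_eq_poch (x : ℂ) (hx : ∀ m : ℕ, x ≠ (m : ℂ)) (n : ℕ) :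
    Complex.Gamma ((n : ℂ) - x) = Complex.Gamma (-x) * poch (-x) n := by
  induction n with
  | zero => simp [poch]
  | succ k ih =>
      have h1 : (((k+1 : ℕ) : ℂ)) - x = ((k:ℂ) - x) + 1 := by push_cast; ring
      rw [h1, Complex.Gamma_add_one _ (sub_ne_zero.mpr (Ne.symm (hx k))), ih, poch_succ]
      ring

lemma poch_shift_ne_zero (x : ℂ) (hx : ∀ m : ℕ, x ≠ (m : ℂ)) (m k : ℕ) :
    poch ((m : ℂ) - x) k ≠ 0 := by
  unfold poch
  refine Finset.prod_ne_zero_iff.mpr fun i _ => ?_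
  have : (m : ℂ) - x + i = ((m + i : ℕ) : ℂ) - x := by push_cast; ring
  rw [this]
  exact sub_ne_zero.mpr (Ne.symm (hx (m + i)))

lemma poch_neg_ne_zero (x : ℂ) (hx : ∀ m : ℕ, x ≠ (m : ℂ)) (k : ℕ) :
    poch (-x) k ≠ 0 := by
  have := poch_shift_ne_zero x hx 0 k
  simpa using this

lemma identA (a : ℝ) (ha : 0 < a) (x : ℂ) (hx : ∀ m : ℕ, x ≠ (m : ℂ)) (n : ℕ) :
    (-1:ℂ) ^ n * monicCharlier a n x / Complex.Gamma ((n : ℂ) - x)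
    = (∑ k ∈ range (n+1), ((a:ℂ) ^ k / (k.factorial : ℂ)) *
        ∏ i ∈ range k, (((n:ℂ) - k + 1 + i) / ((n:ℂ) - k - x + i))) * (Complex.Gamma (-x))⁻¹ := by
  have ha' : (a : ℂ) ≠ 0 := by exact_mod_cast ha.ne'
  have hG : Complex.Gamma (-x) ≠ 0 :=
    Complex.Gamma_ne_zero fun m h => hx m (neg_inj.mp h)
  unfold monicCharlier charlier
  rw [← mul_assoc, ← mul_pow]
  have : (-1 : ℂ) * (-(a:ℂ)) = (a:ℂ) := by ring
  rw [this, Finset.mul_sum, Finset.sum_div, ← Finset.sum_range_reflect, Finset.sum_mul]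
  refine Finset.sum_congr rfl fun k hk => ?_
  rw [Finset.mem_range] at hk
  have hk' : k ≤ n := by omega
  have e1 : n + 1 - 1 - k = n - k := by omega
  rw [e1]
  set j := n - k with hj
  have hjk : k + j = n := by omega
  have hjc : (j : ℂ) = (n : ℂ) - k := by
    rw [hj, Nat.cast_sub hk']
  -- rewrite poch(-n) j
  have F1 : poch (-(n : ℂ)) j = (-1)^j * poch ((k : ℂ) + 1) j := by
    rw [poch_neg_nat n j]
    congr 2
    rw [hjc]; ring
  -- Gamma factorization
  have F2 : Complex.Gamma ((n:ℂ) - x) =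
      Complex.Gamma (-x) * poch (-x) j * poch ((j : ℂ) - x) k := by
    rw [Gamma_eq_poch x hx n, ← hjk, add_comm k j, poch_add,
      show (-x + (j:ℂ)) = (j:ℂ) - x from by ring, mul_assoc]
  have F3 : poch ((k : ℂ) + 1) j * (k.factorial : ℂ) = (n.factorial : ℂ) := by
    have := poch_add 1 k j
    rw [hjk, poch_one_eq_factorial n, poch_one_eq_factorial k] at this
    rw [this, show (1:ℂ) + (k:ℂ) = (k:ℂ) + 1 from by ring]
    ring
  have F4 : poch ((j : ℂ) + 1) k * (j.factorial : ℂ) = (n.factorial : ℂ) := by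
    have := poch_add 1 j k
    rw [show j + k = n by omega, poch_one_eq_factorial n, poch_one_eq_factorial j] at this
    rw [this, show (1:ℂ) + (j:ℂ) = (j:ℂ) + 1 from by ring]
    ring
  have F5 : ∏ i ∈ range k, (((n:ℂ) - k + 1 + i) / ((n:ℂ) - k - x + i))
      = poch ((j:ℂ) + 1) k / poch ((j : ℂ) - x) k := by
    unfold poch
    rw [← Finset.prod_div_distrib]
    refine Finset.prod_congr rfl fun i _ => ?_
    rw [hjc]
  have N1 : poch (-x) j ≠ 0 := poch_neg_ne_zero x hx j
  have N2 : poch ((j : ℂ) - x) k ≠ 0 := poch_shift_ne_zero x hx j k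
  have hjf : ((j.factorial : ℂ)) ≠ 0 := by exact_mod_cast j.factorial_ne_zero
  have hkf : ((k.factorial : ℂ)) ≠ 0 := by exact_mod_cast k.factorial_ne_zero
  have hpow : (-(1 / (a:ℂ))) ^ j = (-1)^j * ((a:ℂ)^j)⁻¹ := by
    rw [neg_pow]
    congr 1
    rw [one_div, inv_pow]
  have key : poch (-(n : ℂ)) j * poch (-x) j / (j.factorial : ℂ) * (-(1 / (a:ℂ))) ^ j
      = poch ((k:ℂ) + 1) j * poch (-x) j / (j.factorial : ℂ) * ((a:ℂ)^j)⁻¹ := by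
    rw [F1, hpow]
    have h2 : ((-1:ℂ)^j * poch ((k:ℂ) + 1) j) * poch (-x) j / (j.factorial : ℂ)
        * ((-1:ℂ)^j * ((a:ℂ)^j)⁻¹)
        = ((-1:ℂ)^j * (-1:ℂ)^j) * (poch ((k:ℂ) + 1) j * poch (-x) j / (j.factorial : ℂ)
          * ((a:ℂ)^j)⁻¹) := by ring
    rw [h2, ← mul_pow]
    norm_num
  rw [key, F2, F5]
  have han : (a:ℂ)^n = (a:ℂ)^k * (a:ℂ)^j := by rw [← pow_add, hjk]
  rw [han]
  have hpj : ((a:ℂ)^j) ≠ 0 := pow_ne_zero _ ha'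
  field_simp
  ring_nf
  ring_nf at F3 F4
  linear_combination F3 - F4


lemma tendsto_ratio (c d : ℂ) :
    Tendsto (fun n : ℕ => ((n:ℂ) + c) / ((n:ℂ) + d)) atTop (𝓝 1) := by
  have hinf : Tendsto (fun n : ℕ => ‖(n:ℂ) + d‖) atTop atTop := by
    apply tendsto_atTop_mono' _ (Eventually.of_forall fun n => ?_)
      (tendsto_atTop_add_const_right _ (-‖d‖) (tendsto_natCast_atTop_atTop (R := ℝ)))
    have : ‖(n:ℂ)‖ ≤ ‖(n:ℂ) + d‖ + ‖d‖ := by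
      calc ‖(n:ℂ)‖ = ‖((n:ℂ) + d) + (-d)‖ := by ring_nf
        _ ≤ ‖(n:ℂ) + d‖ + ‖-d‖ := norm_add_le _ _
        _ = ‖(n:ℂ) + d‖ + ‖d‖ := by rw [norm_neg]
    have hn : ‖(n:ℂ)‖ = (n:ℝ) := by simp
    linarith [this, hn ▸ this]
  have hinv : Tendsto (fun n : ℕ => ((n:ℂ) + d)⁻¹) atTop (𝓝 0) := by
    rw [tendsto_zero_iff_norm_tendsto_zero]
    exact hinf.inv_tendsto_atTop.congr (fun n => by simp [norm_inv])
  have h2 : Tendsto (fun n : ℕ => 1 + (c - d) * ((n:ℂ) + d)⁻¹) atTop (𝓝 1) := by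
    have := (hinv.const_mul (c - d)).const_add 1
    simpa using this
  apply h2.congr'
  filter_upwards [hinf.eventually_gt_atTop 0] with n hn
  have hne : (n:ℂ) + d ≠ 0 := by
    intro h
    rw [h] at hn; simp at hn
  field_simp
  ring

lemma exists_delta (x : ℂ) (hx : ∀ m : ℕ, x ≠ (m:ℂ)) :
    ∃ δ : ℝ, 0 < δ ∧ δ ≤ 1 ∧ ∀ m : ℕ, δ ≤ ‖(m:ℂ) - x‖ := by
  set M := ⌈‖x‖⌉₊ with hM
  have hne : (Finset.range (M+1)).Nonempty := ⟨0, by simp⟩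
  refine ⟨min 1 ((Finset.range (M+1)).inf' hne fun m => ‖(m:ℂ) - x‖), ?_, min_le_left _ _, ?_⟩
  · apply lt_min one_pos
    rw [Finset.lt_inf'_iff]
    intro m _
    rw [norm_pos_iff, sub_ne_zero]
    exact Ne.symm (hx m)
  · intro m
    rcases le_or_gt m M with h | h
    · exact (min_le_right _ _).trans (Finset.inf'_le _ (by simp [Finset.mem_range]; omega))
    · refine (min_le_left _ _).trans ?_
      have h1 : ‖x‖ ≤ M := Nat.le_ceil _
      have h2 : (M:ℝ) + 1 ≤ (m:ℝ) := by exact_mod_cast h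
      have h3 : (m:ℝ) - ‖x‖ ≤ ‖(m:ℂ) - x‖ := by
        have := norm_sub_norm_le ((m:ℂ)) x
        simpa using this
      linarith

lemma tendstoA (a : ℝ) (ha : 0 < a) (x : ℂ) (hx : ∀ m : ℕ, x ≠ (m:ℂ)) :
    Tendsto (fun n : ℕ => ∑ k ∈ range (n+1), ((a:ℂ) ^ k / (k.factorial : ℂ)) *
        ∏ i ∈ range k, (((n:ℂ) - k + 1 + i) / ((n:ℂ) - k - x + i)))
      atTop (𝓝 ((Real.exp a : ℂ))) := by
  obtain ⟨δ, hδ0, hδ1, hδ⟩ := exists_delta x hx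
  set C : ℝ := 1 + ‖1 + x‖ / δ with hC
  have hC1 : 1 ≤ C := le_add_of_nonneg_right (by positivity)
  set f : ℕ → ℕ → ℂ := fun n k => if k ≤ n then ((a:ℂ) ^ k / (k.factorial : ℂ)) *
        ∏ i ∈ range k, (((n:ℂ) - k + 1 + i) / ((n:ℂ) - k - x + i)) else 0 with hf
  have h_sum : Summable (fun k : ℕ => (a * C) ^ k / (k.factorial : ℝ)) :=
    Real.summable_pow_div_factorial _
  have hab : ∀ k : ℕ, Tendsto (f · k) atTop (𝓝 ((a:ℂ) ^ k / (k.factorial : ℂ))) := by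
    intro k
    have hprod : Tendsto (fun n : ℕ => ∏ i ∈ range k,
        (((n:ℂ) - k + 1 + i) / ((n:ℂ) - k - x + i))) atTop (𝓝 1) := by
      have := tendsto_finset_prod (range k)
        (f := fun (i : ℕ) (n : ℕ) => ((n:ℂ) - k + 1 + i) / ((n:ℂ) - k - x + i))
        (fun i _ => (tendsto_ratio (-(k:ℂ) + 1 + i) (-(k:ℂ) - x + i)).congr (fun n => by ring_nf))
      simpa using this
    have : Tendsto (fun n : ℕ => ((a:ℂ) ^ k / (k.factorial : ℂ)) *
        ∏ i ∈ range k, (((n:ℂ) - k + 1 + i) / ((n:ℂ) - k - x + i)))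
        atTop (𝓝 ((a:ℂ) ^ k / (k.factorial : ℂ))) := by
      simpa using hprod.const_mul ((a:ℂ) ^ k / (k.factorial : ℂ))
    apply this.congr'
    filter_upwards [eventually_ge_atTop k] with n hn
    simp only [hf, if_pos hn]
  have h_bound : ∀ n k, ‖f n k‖ ≤ (a * C) ^ k / (k.factorial : ℝ) := by
    intro n k
    rcases le_or_gt k n with h | h
    · rw [hf]
      simp only [if_pos h]
      rw [norm_mul, norm_div, norm_prod]
      have h1 : ‖(a:ℂ) ^ k‖ = a ^ k := by
        rw [norm_pow, Complex.norm_real, Real.norm_of_nonneg ha.le]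
      have h2 : ‖((k.factorial : ℕ) : ℂ)‖ = (k.factorial : ℝ) := by
        rw [Complex.norm_natCast]
      have h3 : ∀ i ∈ range k, ‖((n:ℂ) - k + 1 + i) / ((n:ℂ) - k - x + i)‖ ≤ C := by
        intro i hi
        set m := n - k + i with hm
        have hmc : ((m : ℕ) : ℂ) = (n:ℂ) - k + i := by
          rw [hm]; push_cast [Nat.cast_sub h]; ring
        have hden : (n:ℂ) - k - x + i = ((m:ℕ):ℂ) - x := by rw [hmc]; ring
        have hnum : (n:ℂ) - k + 1 + i = (((m:ℕ):ℂ) - x) + (1 + x) := by rw [hmc]; ring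
        rw [hden, hnum, norm_div]
        have hd : δ ≤ ‖((m:ℕ):ℂ) - x‖ := hδ m
        have hdpos : 0 < ‖((m:ℕ):ℂ) - x‖ := lt_of_lt_of_le hδ0 hd
        calc ‖((m:ℕ):ℂ) - x + (1 + x)‖ / ‖((m:ℕ):ℂ) - x‖
            ≤ (‖((m:ℕ):ℂ) - x‖ + ‖1 + x‖) / ‖((m:ℕ):ℂ) - x‖ := by
              gcongr
              exact norm_add_le _ _
          _ = 1 + ‖1 + x‖ / ‖((m:ℕ):ℂ) - x‖ := by
              rw [add_div, div_self (ne_of_gt hdpos)]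
          _ ≤ C := by
              rw [hC]
              have : ‖1 + x‖ / ‖((m:ℕ):ℂ) - x‖ ≤ ‖1 + x‖ / δ :=
                div_le_div_of_nonneg_left (norm_nonneg _) hδ0 hd
              linarith
      have h4 : ∏ i ∈ range k, ‖((n:ℂ) - k + 1 + i) / ((n:ℂ) - k - x + i)‖ ≤ C ^ k := by
        calc ∏ i ∈ range k, ‖((n:ℂ) - k + 1 + i) / ((n:ℂ) - k - x + i)‖
            ≤ ∏ i ∈ range k, C := Finset.prod_le_prod (fun i _ => norm_nonneg _) h3
          _ = C ^ k := by rw [Finset.prod_const, Finset.card_range]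
      rw [h1, h2]
      calc a ^ k / (k.factorial : ℝ) * ∏ i ∈ range k, ‖((n:ℂ) - k + 1 + i) / ((n:ℂ) - k - x + i)‖
          ≤ a ^ k / (k.factorial : ℝ) * C ^ k := by
            apply mul_le_mul_of_nonneg_left h4 (by positivity)
        _ = (a * C) ^ k / (k.factorial : ℝ) := by rw [mul_pow]; ring
    · rw [hf]
      simp only [if_neg (by omega : ¬ k ≤ n), norm_zero]
      positivity
  have key := tendsto_tsum_of_dominated_convergence h_sum hab (Eventually.of_forall h_bound)
  have hsum_eq : ∀ n : ℕ, (∑' k, f n k) = ∑ k ∈ range (n+1), ((a:ℂ) ^ k / (k.factorial : ℂ)) *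
        ∏ i ∈ range k, (((n:ℂ) - k + 1 + i) / ((n:ℂ) - k - x + i)) := by
    intro n
    rw [tsum_eq_sum (s := range (n+1)) (fun k hk => by
      rw [Finset.mem_range] at hk
      simp only [hf, if_neg (by omega : ¬ k ≤ n)])]
    exact Finset.sum_congr rfl fun k hk => by
      rw [Finset.mem_range] at hk
      simp only [hf, if_pos (by omega : k ≤ n)]
  have hexp : (∑' k : ℕ, (a:ℂ) ^ k / (k.factorial : ℂ)) = ((Real.exp a : ℂ)) := by
    have h1 := congrFun (NormedSpace.exp_eq_tsum_div (𝔸 := ℂ)) ((a:ℝ):ℂ)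
    rw [← h1, ← congrFun Complex.exp_eq_exp_ℂ ((a:ℝ):ℂ), ← Complex.ofReal_exp]
  rw [← hexp]
  exact key.congr hsum_eq
lemma norm_poch_le (u : ℂ) (j : ℕ) : ‖poch u j‖ ≤ (‖u‖ + j) ^ j := by
  unfold poch
  rw [norm_prod]
  calc ∏ i ∈ range j, ‖u + (i:ℂ)‖ ≤ ∏ i ∈ range j, (‖u‖ + j) := by
        apply Finset.prod_le_prod (fun i _ => norm_nonneg _)
        intro i hi
        rw [Finset.mem_range] at hi
        calc ‖u + (i:ℂ)‖ ≤ ‖u‖ + ‖(i:ℂ)‖ := norm_add_le _ _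
          _ = ‖u‖ + i := by rw [Complex.norm_natCast]
          _ ≤ ‖u‖ + j := by
              have : (i:ℝ) ≤ j := by exact_mod_cast hi.le
              linarith
    _ = (‖u‖ + j) ^ j := by rw [Finset.prod_const, Finset.card_range]

lemma caseB (a : ℝ) (ha : 0 < a) (m : ℕ) :
    Tendsto (fun n : ℕ => (-1:ℂ) ^ n * monicCharlier a n ((m:ℕ):ℂ) / Complex.Gamma ((n:ℂ) - m))
      atTop (𝓝 0) := by
  have ha' : (a:ℂ) ≠ 0 := by exact_mod_cast ha.ne'
  set A : ℝ := max 1 (1/a) with hA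
  have hA1 : 1 ≤ A := le_max_left _ _
  set Cm : ℝ := (2*m+1) ^ m * A ^ m with hCm
  have hCm0 : 0 < Cm := by positivity
  set E : ℝ := (2:ℝ) ^ m with hE
  have hE1 : 1 ≤ E := one_le_pow₀ (by norm_num : (1:ℝ) ≤ 2)
  set b : ℝ := a * E with hb
  have hb0 : 0 < b := by positivity
  set K : ℝ := (m+1) * Cm * E ^ m * b ^ (m+1) with hK
  apply squeeze_zero_norm' (a := fun n : ℕ => K * (b ^ (n - (m+1)) / ((n - (m+1)).factorial : ℝ)))
  · -- the bound, eventually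
    filter_upwards [eventually_ge_atTop (m+1)] with n hn
    -- Gamma value
    have hΓ : Complex.Gamma ((n:ℂ) - m) = (((n - m - 1).factorial : ℕ) : ℂ) := by
      have h1 : (n:ℂ) - m = ((n - m - 1 : ℕ) : ℂ) + 1 := by
        rw [Nat.cast_sub (by omega : 1 ≤ n - m), Nat.cast_sub (by omega : m ≤ n)]
        push_cast
        ring
      rw [h1, Complex.Gamma_nat_eq_factorial]
    -- restrict the sum
    have hres : charlier a n ((m:ℕ):ℂ) = ∑ j ∈ range (m+1),
        poch (-(n : ℂ)) j * poch (-((m:ℕ):ℂ)) j / (j.factorial : ℂ) * (-(1 / (a : ℂ))) ^ j := by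
      unfold charlier
      symm
      apply Finset.sum_subset (by intro t ht; rw [Finset.mem_range] at *; omega)
      intro j hj hj'
      rw [Finset.mem_range] at hj hj'
      have : poch (-((m:ℕ):ℂ)) j = 0 := by
        unfold poch
        apply Finset.prod_eq_zero (Finset.mem_range.mpr (by omega : m < j))
        simp
      rw [this]
      ring
    -- per term bound
    have hterm : ∀ j ∈ range (m+1),
        ‖poch (-(n : ℂ)) j * poch (-((m:ℕ):ℂ)) j / (j.factorial : ℂ) * (-(1 / (a : ℂ))) ^ j‖
          ≤ ((n:ℝ) + m) ^ m * Cm := by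
      intro j hj
      rw [Finset.mem_range] at hj
      have hj' : j ≤ m := by omega
      rw [norm_mul, norm_div, norm_pow, norm_neg, norm_div, norm_one, Complex.norm_natCast,
        norm_mul, Complex.norm_real, Real.norm_of_nonneg ha.le]
      have b1 : ‖poch (-(n:ℂ)) j‖ ≤ ((n:ℝ) + m) ^ m := by
        calc ‖poch (-(n:ℂ)) j‖ ≤ (‖-(n:ℂ)‖ + j) ^ j := norm_poch_le _ _
          _ ≤ ((n:ℝ) + m) ^ j := by
              apply pow_le_pow_left₀ (by positivity)
              rw [norm_neg, Complex.norm_natCast]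
              have : (j:ℝ) ≤ m := by exact_mod_cast hj'
              linarith
          _ ≤ ((n:ℝ) + m) ^ m := by
              apply pow_le_pow_right₀ ?_ hj'
              have h1n : (1:ℝ) ≤ n := by exact_mod_cast (by omega : 1 ≤ n)
              have h0m : (0:ℝ) ≤ m := by positivity
              linarith
      have b2 : ‖poch (-((m:ℕ):ℂ)) j‖ ≤ (2*(m:ℝ)+1) ^ m := by
        calc ‖poch (-((m:ℕ):ℂ)) j‖ ≤ (‖-((m:ℕ):ℂ)‖ + j) ^ j := norm_poch_le _ _
          _ ≤ (2*(m:ℝ)+1) ^ j := by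
              apply pow_le_pow_left₀ (by positivity)
              rw [norm_neg, Complex.norm_natCast]
              have : (j:ℝ) ≤ m := by exact_mod_cast hj'
              linarith
          _ ≤ (2*(m:ℝ)+1) ^ m := by
              apply pow_le_pow_right₀ ?_ hj'
              have h0m : (0:ℝ) ≤ m := by positivity
              linarith
      have b3 : (1 / a) ^ j ≤ A ^ m := by
        calc (1/a) ^ j ≤ A ^ j := pow_le_pow_left₀ (by positivity) (le_max_right _ _) j
          _ ≤ A ^ m := pow_le_pow_right₀ hA1 hj'
      have b4 : (1:ℝ) ≤ (j.factorial : ℝ) := by exact_mod_cast j.factorial_pos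
      have hnorm_pochn : (0:ℝ) ≤ ‖poch (-(n:ℂ)) j‖ := norm_nonneg _
      calc ‖poch (-(n:ℂ)) j‖ * ‖poch (-((m:ℕ):ℂ)) j‖ / (j.factorial:ℝ) * (1/a) ^ j
          ≤ ‖poch (-(n:ℂ)) j‖ * ‖poch (-((m:ℕ):ℂ)) j‖ * (1/a) ^ j := by
            apply mul_le_mul_of_nonneg_right _ (by positivity)
            apply div_le_self (by positivity) b4
        _ ≤ (((n:ℝ) + m) ^ m) * ((2*(m:ℝ)+1) ^ m) * (A ^ m) := by
            apply mul_le_mul (mul_le_mul b1 b2 (norm_nonneg _) (by positivity)) b3 (by positivity) (by positivity)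
        _ = ((n:ℝ) + m) ^ m * Cm := by rw [hCm]; ring
    have hcharlier : ‖charlier a n ((m:ℕ):ℂ)‖ ≤ ((m:ℝ)+1) * (((n:ℝ)+m)^m * Cm) := by
      rw [hres]
      calc ‖∑ j ∈ range (m+1),
          poch (-(n : ℂ)) j * poch (-((m:ℕ):ℂ)) j / (j.factorial : ℂ) * (-(1 / (a : ℂ))) ^ j‖
          ≤ ∑ j ∈ range (m+1),
            ‖poch (-(n : ℂ)) j * poch (-((m:ℕ):ℂ)) j / (j.factorial : ℂ) * (-(1 / (a : ℂ))) ^ j‖ :=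
            norm_sum_le _ _
        _ ≤ ∑ _j ∈ range (m+1), ((n:ℝ)+m)^m * Cm := Finset.sum_le_sum hterm
        _ = ((m:ℝ)+1) * (((n:ℝ)+m)^m * Cm) := by
            rw [Finset.sum_const, Finset.card_range, nsmul_eq_mul]
            push_cast
            ring
    have hnorm : ‖(-1:ℂ)^n * monicCharlier a n ((m:ℕ):ℂ) / Complex.Gamma ((n:ℂ) - m)‖
        = a^n * ‖charlier a n ((m:ℕ):ℂ)‖ / ((n - m - 1).factorial : ℝ) := by
      unfold monicCharlier
      rw [norm_div, norm_mul, norm_mul, norm_pow, norm_pow, norm_neg, norm_one, one_pow, one_mul,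
        norm_neg, Complex.norm_real, Real.norm_of_nonneg ha.le, hΓ, Complex.norm_natCast]
    rw [hnorm]
    have hEn : ((n:ℝ)+m)^m ≤ E^n * E^m := by
      have h2 : ((n+m:ℕ):ℝ) ≤ (2:ℝ)^(n+m) := by
        have := (Nat.lt_two_pow_self (n := n+m)).le
        exact_mod_cast this
      calc ((n:ℝ)+m)^m ≤ ((2:ℝ)^(n+m))^m := by
            apply pow_le_pow_left₀ (by positivity)
            push_cast at h2
            exact h2
        _ = ((2:ℝ)^m)^(n+m) := by rw [← pow_mul, ← pow_mul]; ring_nf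
        _ = E^n * E^m := by rw [hE, ← pow_add]
    have hfinal : a^n * ‖charlier a n ((m:ℕ):ℂ)‖ ≤ K * b^(n-(m+1)) := by
      calc a^n * ‖charlier a n ((m:ℕ):ℂ)‖
          ≤ a^n * (((m:ℝ)+1) * (((n:ℝ)+m)^m * Cm)) := by
            apply mul_le_mul_of_nonneg_left hcharlier (by positivity)
        _ ≤ a^n * (((m:ℝ)+1) * ((E^n * E^m) * Cm)) := by
            apply mul_le_mul_of_nonneg_left _ (by positivity)
            apply mul_le_mul_of_nonneg_left _ (by positivity)
            apply mul_le_mul_of_nonneg_right hEn hCm0.le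
        _ = ((m:ℝ)+1) * Cm * E^m * (a*E)^n := by rw [mul_pow]; ring
        _ = ((m:ℝ)+1) * Cm * E^m * (b^(m+1) * b^(n-(m+1))) := by
            rw [← hb, ← pow_add]
            congr 2
            omega
        _ = K * b^(n-(m+1)) := by rw [hK]; push_cast; ring
    calc a^n * ‖charlier a n ((m:ℕ):ℂ)‖ / ((n - m - 1).factorial : ℝ)
        ≤ (K * b^(n-(m+1))) / ((n - m - 1).factorial : ℝ) := by
          gcongr
      _ = K * (b^(n-(m+1)) / ((n-(m+1)).factorial : ℝ)) := by
          rw [show n - m - 1 = n - (m+1) from by omega]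
          ring
  · -- tendsto zero
    have h1 := (FloorSemiring.tendsto_pow_div_factorial_atTop (K := ℝ) b).comp
      (tendsto_sub_atTop_nat (m+1))
    simpa using h1.const_mul K

/-- For `a > 0` and every complex `x`,
`lim_{n→∞} (−1)ⁿ Ĉ_n(x;a) / Γ(n−x) = e^a / Γ(−x)`. (Mathlib's `Complex.Gamma` vanishes at
the nonpositive integers, so `e^a / Γ(−x)` is `0` there, as intended.) -/
theorem monic_charlier_mehler_heine (a : ℝ) (ha : 0 < a) (x : ℂ) :
    Tendsto (fun n : ℕ => (-1 : ℂ) ^ n * monicCharlier a n x / Complex.Gamma ((n : ℂ) - x))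
      atTop (𝓝 ((Real.exp a : ℂ) / Complex.Gamma (-x))) := by
  by_cases h : ∃ m : ℕ, x = (m : ℂ)
  · obtain ⟨m, rfl⟩ := h
    rw [show -((m:ℕ):ℂ) = -(m:ℂ) from by push_cast; ring, Complex.Gamma_neg_nat_eq_zero, div_zero]
    exact caseB a ha m
  · push_neg at h
    have h1 := (tendstoA a ha x h).mul_const (Complex.Gamma (-x))⁻¹
    rw [div_eq_mul_inv]
    exact h1.congr fun n => (identA a ha x h n).symm
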